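/- The Demazure–Lusztig operators are well defined on L (for every f ∈ L and i = 0, 1, the element f − s_i(f) is divisible by 1 − 𝕏_i² in L) and satisfy (Û_i − u_i^{1/2})(Û_i + u_i^{−1/2}) = 0 on L. The operator Û_i' := u_i^{−1/2}·s_i + ((u_i^{1/2} − u_i^{−1/2})·𝕏_i² + (v_i^{1/2} − v_i^{−1/2})·𝕏_i)·(1 − s_i)/(1 − 𝕏_i²) is a two-sided inverse of Û_i. Defining V̂₁(f) = Û₁'(𝕏⁻¹·f) and V̂₀(f) = q^{−1/4}·𝕏·Û₀'(f), one has (V̂_i − v_i^{1/2})(V̂_i + v_i^{−1/2}) = 0 for i = 0, 1 and q^{1/4}·V̂₁ ∘ V̂₀ ∘ Û₀ ∘ Û₁ = id. Consequently there is an R-algebra homomorphism from H to the R-algebra of R-linear endomorphisms of L sending U_i ↦ Û_i and V_i ↦ V̂_i, and under this homomorphism the element 𝕏 = V₁⁻¹·U₁⁻¹ of H acts as multiplication by 𝕏. -/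

import Mathlib

noncomputable section

/-- The base ring `R = ℤ[q^{±1/4}, u₀^{±1/2}, u₁^{±1/2}, v₀^{±1/2}, v₁^{±1/2}]`:
the group algebra over `ℤ` of the free abelian group on five generators, where the
exponents record the variables `(q^{1/4}, u₀^{1/2}, u₁^{1/2}, v₀^{1/2}, v₁^{1/2})`. -/
abbrev R5 : Type := AddMonoidAlgebra ℤ (ℤ × ℤ × ℤ × ℤ × ℤ)

namespace R5
/-- `q^{1/4}` -/
def q4 : R5 := AddMonoidAlgebra.single (1, 0, 0, 0, 0) 1
/-- `q^{-1/4}` -/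
def q4i : R5 := AddMonoidAlgebra.single (-1, 0, 0, 0, 0) 1
/-- `u₀^{1/2}` -/
def u0h : R5 := AddMonoidAlgebra.single (0, 1, 0, 0, 0) 1
def u0hi : R5 := AddMonoidAlgebra.single (0, -1, 0, 0, 0) 1
/-- `u₁^{1/2}` -/
def u1h : R5 := AddMonoidAlgebra.single (0, 0, 1, 0, 0) 1
def u1hi : R5 := AddMonoidAlgebra.single (0, 0, -1, 0, 0) 1
/-- `v₀^{1/2}` -/
def v0h : R5 := AddMonoidAlgebra.single (0, 0, 0, 1, 0) 1
def v0hi : R5 := AddMonoidAlgebra.single (0, 0, 0, -1, 0) 1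
/-- `v₁^{1/2}` -/
def v1h : R5 := AddMonoidAlgebra.single (0, 0, 0, 0, 1) 1
def v1hi : R5 := AddMonoidAlgebra.single (0, 0, 0, 0, -1) 1
end R5

/-- Generators `U₀, U₁, V₀, V₁` of the `C∨C₁` DAHA. -/
inductive Cgen : Type
  | u0 | u1 | v0 | v1

open FreeAlgebra in
/-- The defining relations of the DAHA of type `C∨C₁`:
`(U_i − u_i^{1/2})(U_i + u_i^{−1/2}) = 0`, `(V_i − v_i^{1/2})(V_i + v_i^{−1/2}) = 0`
for `i = 0, 1`, and `q^{1/4}·V₁·V₀·U₀·U₁ = 1`. -/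
inductive Crel : FreeAlgebra R5 Cgen → FreeAlgebra R5 Cgen → Prop
  | heckeU0 : Crel ((ι R5 Cgen.u0 - algebraMap R5 _ R5.u0h) *
      (ι R5 Cgen.u0 + algebraMap R5 _ R5.u0hi)) 0
  | heckeU1 : Crel ((ι R5 Cgen.u1 - algebraMap R5 _ R5.u1h) *
      (ι R5 Cgen.u1 + algebraMap R5 _ R5.u1hi)) 0
  | heckeV0 : Crel ((ι R5 Cgen.v0 - algebraMap R5 _ R5.v0h) *
      (ι R5 Cgen.v0 + algebraMap R5 _ R5.v0hi)) 0
  | heckeV1 : Crel ((ι R5 Cgen.v1 - algebraMap R5 _ R5.v1h) *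
      (ι R5 Cgen.v1 + algebraMap R5 _ R5.v1hi)) 0
  | unit : Crel (algebraMap R5 _ R5.q4 * ι R5 Cgen.v1 * ι R5 Cgen.v0 *
      ι R5 Cgen.u0 * ι R5 Cgen.u1) 1

/-- The DAHA of type `C∨C₁`. -/
abbrev H : Type := RingQuot Crel

namespace H

def U0 : H := RingQuot.mkAlgHom R5 Crel (FreeAlgebra.ι R5 Cgen.u0)
def U1 : H := RingQuot.mkAlgHom R5 Crel (FreeAlgebra.ι R5 Cgen.u1)
def V0 : H := RingQuot.mkAlgHom R5 Crel (FreeAlgebra.ι R5 Cgen.v0)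
def V1 : H := RingQuot.mkAlgHom R5 Crel (FreeAlgebra.ι R5 Cgen.v1)

/-- image of a base-ring element in `H` -/
def c (r : R5) : H := algebraMap R5 H r

/-- `U₀⁻¹ = U₀ − u₀^{1/2} + u₀^{−1/2}` -/
def U0i : H := U0 - c R5.u0h + c R5.u0hi
/-- `U₁⁻¹ = U₁ − u₁^{1/2} + u₁^{−1/2}` -/
def U1i : H := U1 - c R5.u1h + c R5.u1hi
/-- `V₀⁻¹ = V₀ − v₀^{1/2} + v₀^{−1/2}` -/
def V0i : H := V0 - c R5.v0h + c R5.v0hi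
/-- `V₁⁻¹ = V₁ − v₁^{1/2} + v₁^{−1/2}` -/
def V1i : H := V1 - c R5.v1h + c R5.v1hi
/-- `𝕏 = V₁⁻¹·U₁⁻¹` -/
def XX : H := V1i * U1i
/-- `𝕏⁻¹ = U₁·V₁` -/
def XXi : H := U1 * V1
/-- `𝕐 = U₀·U₁` -/
def YY : H := U0 * U1
/-- `𝕐⁻¹ = U₁⁻¹·U₀⁻¹` -/
def YYi : H := U1i * U0i

end H

open H

/-- `φ : H → H'` is semilinear over `θ : R → R` -/
def Semilin (θ : R5 ≃+* R5) (f : H → H) : Prop :=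
  ∀ r : R5, f (algebraMap R5 H r) = algebraMap R5 H (θ r)

open LaurentPolynomial in
/-- The polynomial representation space `L = R[𝕏^{±1}]`. -/
abbrev L : Type := LaurentPolynomial R5

/-- `q^{n/4} ∈ R` -/
def R5.qpow (n : ℤ) : R5 := AddMonoidAlgebra.single (n, 0, 0, 0, 0) 1

/-- `𝕏₀ = q^{1/4}·𝕏⁻¹` and `𝕏₁ = 𝕏` -/
def Xl : Fin 2 → L :=
  ![LaurentPolynomial.C R5.q4 * LaurentPolynomial.T (-1), LaurentPolynomial.T 1]

def uh : Fin 2 → R5 := ![R5.u0h, R5.u1h]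
def uhi : Fin 2 → R5 := ![R5.u0hi, R5.u1hi]
def vh : Fin 2 → R5 := ![R5.v0h, R5.v1h]
def vhi : Fin 2 → R5 := ![R5.v0hi, R5.v1hi]

/-- defining property of the operators `s₁, s₀`:
`s₁(𝕏^m) = 𝕏^{−m}` and `s₀(𝕏^m) = q^{m/2}·𝕏^{−m}`. -/
def Sconds (s : Fin 2 → Module.End R5 L) : Prop :=
  (∀ m : ℤ, s 1 (LaurentPolynomial.T m) = LaurentPolynomial.T (-m)) ∧
  (∀ m : ℤ, s 0 (LaurentPolynomial.T m) =
    LaurentPolynomial.C (R5.qpow (2 * m)) * LaurentPolynomial.T (-m))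

/-- defining property of the Demazure–Lusztig operators `Û_i`:
`Û_i(f) = u_i^{1/2}·s_i(f) + ((u_i^{1/2} − u_i^{−1/2}) + (v_i^{1/2} − v_i^{−1/2})·𝕏_i)·g`
whenever `(1 − 𝕏_i²)·g = f − s_i(f)`. -/
def Uconds (s U : Fin 2 → Module.End R5 L) : Prop :=
  ∀ (i : Fin 2) (f g : L), (1 - Xl i ^ 2) * g = f - s i f →
    U i f = uh i • s i f +
      (LaurentPolynomial.C (uh i - uhi i) + LaurentPolynomial.C (vh i - vhi i) * Xl i) * g

/-- defining property of the inverse operators `Û_i'`: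
`Û_i'(f) = u_i^{−1/2}·s_i(f) + ((u_i^{1/2} − u_i^{−1/2})·𝕏_i² + (v_i^{1/2} − v_i^{−1/2})·𝕏_i)·g`
whenever `(1 − 𝕏_i²)·g = f − s_i(f)`. -/
def U'conds (s U' : Fin 2 → Module.End R5 L) : Prop :=
  ∀ (i : Fin 2) (f g : L), (1 - Xl i ^ 2) * g = f - s i f →
    U' i f = uhi i • s i f +
      (LaurentPolynomial.C (uh i - uhi i) * Xl i ^ 2 +
        LaurentPolynomial.C (vh i - vhi i) * Xl i) * g

namespace S14
open LaurentPolynomial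

lemma qpow_mul (a b : ℤ) : R5.qpow a * R5.qpow b = R5.qpow (a + b) := by
  simp [R5.qpow, AddMonoidAlgebra.single_mul_single]

lemma qpow_zero : R5.qpow 0 = 1 := rfl

lemma qpow_pow (a : ℤ) (n : ℕ) : R5.qpow a ^ n = R5.qpow (n * a) := by
  induction n with
  | zero => simp [qpow_zero]
  | succ n ih => rw [pow_succ, ih, qpow_mul]; congr 1; push_cast; ring

lemma q4_eq : R5.q4 = R5.qpow 1 := rfl
lemma q4i_eq : R5.q4i = R5.qpow (-1) := rfl

lemma smul_eq_C_mul (r : R5) (f : L) : r • f = C r * f := by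
  rw [C_eq_algebraMap]; exact Algebra.smul_def r f

def F1 : Multiplicative ℤ →* L where
  toFun m := T (-(Multiplicative.toAdd m))
  map_one' := by simp
  map_mul' x y := by simp only [toAdd_mul, neg_add, T_add]

/-- `σ₁ : T ↦ T⁻¹` -/
def σ1 : L →ₐ[R5] L := AddMonoidAlgebra.lift R5 L ℤ F1

@[simp] lemma σ1_T (m : ℤ) : σ1 (T m) = T (-m) := by
  simpa [σ1, F1] using AddMonoidAlgebra.lift_single F1 m (1 : R5)

def F0 : Multiplicative ℤ →* L where
  toFun m := C (R5.qpow (2 * Multiplicative.toAdd m)) * T (-(Multiplicative.toAdd m))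
  map_one' := by simp [qpow_zero]
  map_mul' x y := by
    simp only [toAdd_mul, neg_add, T_add, mul_add, ← qpow_mul, map_mul]
    ring

/-- `σ₀ : T ↦ q^{1/2} T⁻¹` -/
def σ0 : L →ₐ[R5] L := AddMonoidAlgebra.lift R5 L ℤ F0

@[simp] lemma σ0_T (m : ℤ) : σ0 (T m) = C (R5.qpow (2 * m)) * T (-m) := by
  simpa [σ0, F0] using AddMonoidAlgebra.lift_single F0 m (1 : R5)

lemma σC (φ : L →ₐ[R5] L) (r : R5) : φ (C r) = C r := by
  rw [C_eq_algebraMap]; exact φ.commutes r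

@[simp] lemma σ1_σ1 (f : L) : σ1 (σ1 f) = f := by
  have : σ1.comp σ1 = AlgHom.id R5 L := by
    apply AddMonoidAlgebra.algHom_ext
    intro m
    show σ1 (σ1 (T m)) = T m
    simp
    exact Subsingleton.elim _ _
  exact DFunLike.congr_fun this f

@[simp] lemma σ0_σ0 (f : L) : σ0 (σ0 f) = f := by
  have : σ0.comp σ0 = AlgHom.id R5 L := by
    apply AddMonoidAlgebra.algHom_ext
    intro m
    show σ0 (σ0 (T m)) = T m
    simp only [σ0_T, map_mul, σC, neg_neg]
    rw [← mul_assoc, ← map_mul, qpow_mul]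
    simp [qpow_zero]
    exact Subsingleton.elim _ _
  exact DFunLike.congr_fun this f

lemma one_sub_C_mul_T_ne (r : R5) (k : ℤ) (hk : k ≠ 0) : (1 : L) - C r * T k ≠ 0 := by
  intro h
  have h1 : (1 : L) = C r * T k := sub_eq_zero.mp h
  rw [← single_eq_C_mul_T] at h1
  have h2 : (AddMonoidAlgebra.single 0 (1 : R5) : L) = AddMonoidAlgebra.single k r := h1
  rcases AddMonoidAlgebra.single_inj.mp h2 with ⟨h3, _⟩ | ⟨h3, _⟩
  · exact hk h3.symm
  · exact one_ne_zero h3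

lemma X0sq : (C R5.q4 * T (-1) : L) ^ 2 = C (R5.qpow 2) * T (-2) := by
  rw [mul_pow, ← map_pow, T_pow, q4_eq, qpow_pow]
  norm_num

lemma D1_ne : (1 : L) - (T 1) ^ 2 ≠ 0 := by
  have : (T 1 : L) ^ 2 = C 1 * T 2 := by rw [T_pow]; norm_num
  rw [this]
  exact one_sub_C_mul_T_ne 1 2 (by norm_num)

lemma D0_ne : (1 : L) - (C R5.q4 * T (-1)) ^ 2 ≠ 0 := by
  rw [X0sq]
  exact one_sub_C_mul_T_ne _ (-2) (by norm_num)

lemma cancel1 {a b : L} (h : ((1 : L) - (T 1) ^ 2) * a = ((1 : L) - (T 1) ^ 2) * b) : a = b :=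
  mul_left_cancel₀ D1_ne h

lemma cancel0 {a b : L}
    (h : ((1 : L) - (C R5.q4 * T (-1)) ^ 2) * a = ((1 : L) - (C R5.q4 * T (-1)) ^ 2) * b) :
    a = b :=
  mul_left_cancel₀ D0_ne h

lemma one_sub_dvd (x : L) (n : ℕ) : (1 - x) ∣ (1 - x ^ n) := by
  induction n with
  | zero => simp
  | succ n ih =>
    obtain ⟨c, hc⟩ := ih
    exact ⟨c + x ^ n, by rw [mul_add, ← hc]; ring⟩

lemma exists1T (m : ℤ) : ∃ g : L, ((1 : L) - (T 1) ^ 2) * g = T m - T (-m) := by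
  have hT2 : (T 1 : L) ^ 2 = T 2 := by rw [T_pow]; norm_num
  obtain ⟨n, rfl | rfl⟩ := m.eq_nat_or_neg
  · obtain ⟨c, hc⟩ := one_sub_dvd ((T 1 : L) ^ 2) n
    refine ⟨-(T (-(n : ℤ)) * c), ?_⟩
    have h2 : ((1 : L) - (T 1) ^ 2) * c = 1 - T (n * 2) := by rw [← hc, hT2, T_pow]
    calc ((1 : L) - (T 1) ^ 2) * -(T (-(n : ℤ)) * c)
        = -(T (-(n : ℤ)) * (((1 : L) - (T 1) ^ 2) * c)) := by ring
      _ = T (-(n : ℤ)) * T ((n : ℤ) * 2) - T (-(n : ℤ)) := by rw [h2]; ring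
      _ = T (n : ℤ) - T (-(n : ℤ)) := by rw [← T_add]; ring_nf
  · obtain ⟨c, hc⟩ := one_sub_dvd ((T 1 : L) ^ 2) n
    refine ⟨T (-(n : ℤ)) * c, ?_⟩
    have h2 : ((1 : L) - (T 1) ^ 2) * c = 1 - T (n * 2) := by rw [← hc, hT2, T_pow]
    calc ((1 : L) - (T 1) ^ 2) * (T (-(n : ℤ)) * c)
        = T (-(n : ℤ)) * (((1 : L) - (T 1) ^ 2) * c) := by ring
      _ = T (-(n : ℤ)) - T (-(n : ℤ)) * T ((n : ℤ) * 2) := by rw [h2]; ring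
      _ = T (-(n : ℤ)) - T (-(-(n : ℤ))) := by
            rw [← T_add]
            have : -(n : ℤ) + (n : ℤ) * 2 = (n : ℤ) := by ring
            rw [this, neg_neg]

lemma exists0T (m : ℤ) : ∃ g : L,
    ((1 : L) - (C R5.q4 * T (-1)) ^ 2) * g = T m - C (R5.qpow (2 * m)) * T (-m) := by
  have yn : ∀ n : ℕ, ((C R5.q4 * T (-1) : L) ^ 2) ^ n
      = C (R5.qpow (2 * (n : ℤ))) * T ((n : ℤ) * (-2)) := by
    intro n
    rw [X0sq, mul_pow, ← map_pow, T_pow, qpow_pow]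
    congr 2
    ring
  have e1 : ∀ n : ℕ, (T (n : ℤ) * T ((n : ℤ) * (-2)) : L) = T (-(n : ℤ)) := by
    intro n; rw [← T_add]; congr 1; ring
  obtain ⟨n, rfl | rfl⟩ := m.eq_nat_or_neg
  · obtain ⟨c, hc⟩ := one_sub_dvd ((C R5.q4 * T (-1) : L) ^ 2) n
    rw [yn] at hc
    refine ⟨T (n : ℤ) * c, ?_⟩
    calc ((1 : L) - (C R5.q4 * T (-1)) ^ 2) * (T (n : ℤ) * c)
        = T (n : ℤ) * (((1 : L) - (C R5.q4 * T (-1)) ^ 2) * c) := by ring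
      _ = T (n : ℤ) * (1 - C (R5.qpow (2 * (n : ℤ))) * T ((n : ℤ) * (-2))) := by rw [← hc]
      _ = T (n : ℤ) - C (R5.qpow (2 * (n : ℤ))) * (T (n : ℤ) * T ((n : ℤ) * (-2))) := by ring
      _ = T (n : ℤ) - C (R5.qpow (2 * (n : ℤ))) * T (-(n : ℤ)) := by rw [e1]
  · obtain ⟨c, hc⟩ := one_sub_dvd ((C R5.q4 * T (-1) : L) ^ 2) n
    rw [yn] at hc
    have e3 : C (R5.qpow (2 * (-(n : ℤ)))) * C (R5.qpow (2 * (n : ℤ))) = (1 : L) := by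
      rw [← map_mul, qpow_mul]
      norm_num [qpow_zero]
    refine ⟨-(C (R5.qpow (2 * (-(n : ℤ)))) * T (n : ℤ) * c), ?_⟩
    calc ((1 : L) - (C R5.q4 * T (-1)) ^ 2) * -(C (R5.qpow (2 * (-(n : ℤ)))) * T (n : ℤ) * c)
        = -(C (R5.qpow (2 * (-(n : ℤ)))) * T (n : ℤ) *
            (((1 : L) - (C R5.q4 * T (-1)) ^ 2) * c)) := by ring
      _ = -(C (R5.qpow (2 * (-(n : ℤ)))) * T (n : ℤ) *
            (1 - C (R5.qpow (2 * (n : ℤ))) * T ((n : ℤ) * (-2)))) := by rw [← hc]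
      _ = C (R5.qpow (2 * (-(n : ℤ)))) * C (R5.qpow (2 * (n : ℤ))) *
            (T (n : ℤ) * T ((n : ℤ) * (-2)))
          - C (R5.qpow (2 * (-(n : ℤ)))) * T (n : ℤ) := by ring
      _ = 1 * T (-(n : ℤ)) - C (R5.qpow (2 * (-(n : ℤ)))) * T (n : ℤ) := by rw [e1, e3]
      _ = T (-(n : ℤ)) - C (R5.qpow (2 * (-(n : ℤ)))) * T (-(-(n : ℤ))) := by
          rw [neg_neg]; ring

lemma exists_g1 (f : L) : ∃ g : L, ((1 : L) - (T 1) ^ 2) * g = f - σ1 f := by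
  induction f using AddMonoidAlgebra.induction_on with
  | of m =>
    have h : (AddMonoidAlgebra.of R5 ℤ (Multiplicative.ofAdd m)) = (T m : L) := rfl
    rw [h, σ1_T]
    exact exists1T m
  | add p q hp hq =>
    obtain ⟨a, ha⟩ := hp; obtain ⟨b, hb⟩ := hq
    exact ⟨a + b, by rw [map_add]; linear_combination ha + hb⟩
  | smul r p hp =>
    obtain ⟨a, ha⟩ := hp
    exact ⟨r • a, by rw [map_smul, mul_smul_comm, ha, smul_sub]⟩

lemma exists_g0 (f : L) : ∃ g : L, ((1 : L) - (C R5.q4 * T (-1)) ^ 2) * g = f - σ0 f := by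
  induction f using AddMonoidAlgebra.induction_on with
  | of m =>
    have h : (AddMonoidAlgebra.of R5 ℤ (Multiplicative.ofAdd m)) = (T m : L) := rfl
    rw [h, σ0_T]
    exact exists0T m
  | add p q hp hq =>
    obtain ⟨a, ha⟩ := hp; obtain ⟨b, hb⟩ := hq
    exact ⟨a + b, by rw [map_add]; linear_combination ha + hb⟩
  | smul r p hp =>
    obtain ⟨a, ha⟩ := hp
    exact ⟨r • a, by rw [map_smul, mul_smul_comm, ha, smul_sub]⟩

/-- the division operator for `i = 1` -/
def gm1 : L →ₗ[R5] L where
  toFun f := (exists_g1 f).choose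
  map_add' p q := cancel1 (by
    rw [(exists_g1 _).choose_spec, mul_add, (exists_g1 _).choose_spec,
      (exists_g1 _).choose_spec, map_add]
    ring)
  map_smul' r p := cancel1 (by
    rw [(exists_g1 _).choose_spec, RingHom.id_apply, mul_smul_comm,
      (exists_g1 _).choose_spec, map_smul, smul_sub])

lemma gm1_spec (f : L) : ((1 : L) - (T 1) ^ 2) * gm1 f = f - σ1 f :=
  (exists_g1 f).choose_spec

/-- the division operator for `i = 0` -/
def gm0 : L →ₗ[R5] L where
  toFun f := (exists_g0 f).choose
  map_add' p q := cancel0 (by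
    rw [(exists_g0 _).choose_spec, mul_add, (exists_g0 _).choose_spec,
      (exists_g0 _).choose_spec, map_add]
    ring)
  map_smul' r p := cancel0 (by
    rw [(exists_g0 _).choose_spec, RingHom.id_apply, mul_smul_comm,
      (exists_g0 _).choose_spec, map_smul, smul_sub])

lemma gm0_spec (f : L) : ((1 : L) - (C R5.q4 * T (-1)) ^ 2) * gm0 f = f - σ0 f :=
  (exists_g0 f).choose_spec

/-- Abstract core data for one Demazure–Lusztig operator. -/
structure Core where
  σ : L →ₐ[R5] L
  X : L
  Xi : L
  cu : L
  cui : L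
  cv : L
  cvi : L
  g : L →ₗ[R5] L
  hcancel : ∀ {a b : L}, (1 - X ^ 2) * a = (1 - X ^ 2) * b → a = b
  hg : ∀ p : L, (1 - X ^ 2) * g p = p - σ p
  hσσ : ∀ p : L, σ (σ p) = p
  hσX : σ X = Xi
  hXX : X * Xi = 1
  hu : cu * cui = 1
  hv : cv * cvi = 1
  hσcu : σ cu = cu
  hσcui : σ cui = cui
  hσcv : σ cv = cv
  hσcvi : σ cvi = cvi

namespace Core

variable (K : Core)

def Uop (p : L) : L := K.cu * K.σ p + ((K.cu - K.cui) + (K.cv - K.cvi) * K.X) * K.g p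

def U'op (p : L) : L :=
  K.cui * K.σ p + ((K.cu - K.cui) * K.X ^ 2 + (K.cv - K.cvi) * K.X) * K.g p

lemma Uop_def (p : L) :
    K.Uop p = K.cu * K.σ p + ((K.cu - K.cui) + (K.cv - K.cvi) * K.X) * K.g p := rfl

lemma U'op_def (p : L) :
    K.U'op p = K.cui * K.σ p + ((K.cu - K.cui) * K.X ^ 2 + (K.cv - K.cvi) * K.X) * K.g p := rfl

lemma hσXi : K.σ K.Xi = K.X := by rw [← K.hσX, K.hσσ]

lemma hσg (p : L) : K.σ (K.g p) = K.X ^ 2 * K.g p := by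
  apply K.hcancel
  have h1 : (1 - K.Xi ^ 2) * K.σ (K.g p) = K.σ p - p := by
    have h := congrArg K.σ (K.hg p)
    simpa only [map_mul, map_sub, map_one, map_pow, K.hσX, K.hσσ] using h
  linear_combination (-(K.X ^ 2)) * h1 + (-(K.X ^ 2)) * K.hg p +
    (-((K.X * K.Xi + 1) * K.σ (K.g p))) * K.hXX

lemma hσU (p : L) :
    K.σ (K.Uop p) = K.cu * p + ((K.cu - K.cui) * K.X ^ 2 + (K.cv - K.cvi) * K.X) * K.g p := by
  rw [Uop_def]
  simp only [map_add, map_mul, map_sub, K.hσσ, K.hσX, K.hσcu, K.hσcui, K.hσcv, K.hσcvi, K.hσg]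
  linear_combination ((K.cv - K.cvi) * K.X * K.g p) * K.hXX

lemma hgU (p : L) : K.g (K.Uop p) = -(K.cui * K.g p) := by
  apply K.hcancel
  rw [K.hg (K.Uop p), K.hσU p, Uop_def]
  linear_combination K.cu * K.hg p

lemma heckeU (p : L) : K.Uop (K.Uop p) = (K.cu - K.cui) * K.Uop p + p := by
  rw [K.Uop_def (K.Uop p), K.hσU p, K.hgU p, Uop_def]
  linear_combination (K.cu * K.cui - K.cu ^ 2) * K.hg p + p * K.hu

lemma hσU' (p : L) :
    K.σ (K.U'op p) = K.cui * p + ((K.cu - K.cui) + (K.cv - K.cvi) * K.X) * K.g p := by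
  rw [U'op_def]
  simp only [map_add, map_mul, map_sub, map_pow, K.hσσ, K.hσX, K.hσcu, K.hσcui, K.hσcv,
    K.hσcvi, K.hσg]
  linear_combination (K.g p * ((K.cu - K.cui) * (1 + K.X * K.Xi) + (K.cv - K.cvi) * K.X)) * K.hXX

lemma hU'U (p : L) : K.U'op (K.Uop p) = p := by
  rw [K.U'op_def (K.Uop p), K.hσU p, K.hgU p]
  linear_combination p * K.hu

lemma hgU' (p : L) : K.g (K.U'op p) = -(K.cu * K.g p) := by
  apply K.hcancel
  rw [K.hg (K.U'op p), K.hσU' p, U'op_def]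
  linear_combination K.cui * K.hg p

lemma hUU' (p : L) : K.Uop (K.U'op p) = p := by
  rw [K.Uop_def (K.U'op p), K.hσU' p, K.hgU' p]
  linear_combination p * K.hu

lemma hgXi (p : L) : K.g (K.Xi * p) = K.Xi * K.σ p + K.Xi * K.g p := by
  apply K.hcancel
  rw [K.hg (K.Xi * p), map_mul, K.hσXi]
  linear_combination (K.X ^ 2 * K.Xi - K.Xi - K.X) * K.hg p +
    (K.g p * (K.X ^ 3 - K.X) + p * K.X) * K.hXX

lemma hA (p : L) : K.U'op (K.Xi * p) =
    (K.cu * K.X + (K.cv - K.cvi)) * K.σ p + ((K.cu - K.cui) * K.X + (K.cv - K.cvi)) * K.g p := by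
  rw [U'op_def, map_mul, K.hσXi, K.hgXi]
  linear_combination
    ((K.cvi - K.cv) + K.X * (K.cui - K.cu) + K.X * K.Xi * (K.cv - K.cvi) +
      K.X ^ 2 * K.Xi * (K.cu - K.cui)) * K.hg p +
    (K.g p * (K.X ^ 2 * (K.cv - K.cvi) + K.X ^ 3 * (K.cu - K.cui)) +
      p * ((K.cv - K.cvi) + K.X * (K.cu - K.cui))) * K.hXX

lemma hσA (p : L) : K.σ (K.U'op (K.Xi * p)) =
    (K.cu * K.Xi + (K.cv - K.cvi)) * p +
      ((K.cu - K.cui) * K.X + (K.cv - K.cvi) * K.X ^ 2) * K.g p := by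
  rw [K.hA p]
  simp only [map_add, map_mul, map_sub, K.hσσ, K.hσX, K.hσcu, K.hσcui, K.hσcv, K.hσcvi, K.hσg]
  linear_combination ((K.cu - K.cui) * K.X * K.g p) * K.hXX

lemma hgA (p : L) : K.g (K.U'op (K.Xi * p)) =
    -(K.cu * K.Xi) * K.σ p - (K.cu * K.Xi) * K.g p := by
  apply K.hcancel
  rw [K.hg (K.U'op (K.Xi * p)), K.hσA p, K.hA p]
  linear_combination
    ((K.cv - K.cvi) + K.cu * (K.Xi + K.X - K.X ^ 2 * K.Xi)) * K.hg p +
    (K.g p * (K.X - K.X ^ 3) * K.cu - p * K.X * K.cu) * K.hXX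

lemma heckeA (p : L) : K.U'op (K.Xi * K.U'op (K.Xi * p)) =
    (K.cv - K.cvi) * K.U'op (K.Xi * p) + p := by
  rw [K.U'op_def (K.Xi * K.U'op (K.Xi * p)), map_mul, K.hσXi,
    K.hgXi (K.U'op (K.Xi * p)), K.hσA p, K.hgA p, K.hA p]
  linear_combination
    (-((K.cv - K.cvi) ^ 2) - K.cu * (K.cv - K.cvi) * K.X - K.cu * (K.cv - K.cvi) * K.X * K.Xi ^ 2
      - K.cu * (K.cu - K.cui) * K.X ^ 2 * K.Xi ^ 2) * K.hg p +
    (K.g p * (-(K.X * K.cui * (K.cv - K.cvi)) + K.X ^ 2 * (K.cv - K.cvi) ^ 2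
        - K.X ^ 2 * K.cui * (K.cu - K.cui) - K.X ^ 2 * K.Xi * K.cu * (K.cv - K.cvi)
        - K.X ^ 3 * K.cui * (K.cv - K.cvi) + K.X ^ 3 * K.cu * (K.cv - K.cvi)
        - K.X ^ 3 * K.Xi * K.cu * (K.cu - K.cui)) +
      p * ((K.cv - K.cvi) ^ 2 + K.cu * K.cui - K.X * K.cui * (K.cv - K.cvi)
        + K.X * K.cu * (K.cv - K.cvi))) * K.hXX +
    p * K.hu

lemma hgB (p : L) : K.g (K.Xi * K.U'op p) =
    K.cui * K.Xi * K.σ p + ((K.cv - K.cvi) - K.cui * K.X) * K.g p := by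
  apply K.hcancel
  rw [K.hg (K.Xi * K.U'op p), map_mul, K.hσXi, K.hσU' p, U'op_def]
  linear_combination (K.X ^ 2 * K.Xi * K.cui) * K.hg p +
    (K.g p * ((K.cv - K.cvi) - 2 * K.X * K.cui + K.X * K.cu + K.X ^ 3 * K.cui) +
      p * K.X * K.cui) * K.hXX

lemma heckeB (p : L) : K.Xi * K.U'op (K.Xi * K.U'op p) =
    (K.cv - K.cvi) * (K.Xi * K.U'op p) + p := by
  rw [K.U'op_def (K.Xi * K.U'op p), map_mul, K.hσXi, K.hσU' p, K.hgB p,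
    K.U'op_def p]
  linear_combination
    (-(K.Xi * K.cui * (K.cv - K.cvi)) + K.X * K.Xi ^ 2 * K.cui * (K.cv - K.cvi)
      + K.X ^ 2 * K.Xi ^ 2 * K.cui * (K.cu - K.cui)) * K.hg p +
    (K.g p * (-(K.Xi * K.cui * (K.cv - K.cvi)) - K.X * K.Xi * K.cui * (K.cu - K.cui)
        + K.X ^ 2 * K.Xi * K.cui * (K.cv - K.cvi) + K.X ^ 3 * K.Xi * K.cui * (K.cu - K.cui)) +
      p * (K.cu * K.cui + K.Xi * K.cui * (K.cv - K.cvi) + K.X * K.Xi * K.cui * (K.cu - K.cui)))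
      * K.hXX +
    p * K.hu

end Core

lemma R5single_mul_one (a b : ℤ × ℤ × ℤ × ℤ × ℤ) (h : a + b = 0) :
    (AddMonoidAlgebra.single a 1 : R5) * AddMonoidAlgebra.single b 1 = 1 := by
  rw [AddMonoidAlgebra.single_mul_single, h, mul_one]
  rfl

lemma q4_mul_q4i : R5.q4 * R5.q4i = 1 := R5single_mul_one _ _ (by simp [Prod.ext_iff])
lemma u0_rel : R5.u0h * R5.u0hi = 1 := R5single_mul_one _ _ (by simp [Prod.ext_iff])
lemma u1_rel : R5.u1h * R5.u1hi = 1 := R5single_mul_one _ _ (by simp [Prod.ext_iff])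
lemma v0_rel : R5.v0h * R5.v0hi = 1 := R5single_mul_one _ _ (by simp [Prod.ext_iff])
lemma v1_rel : R5.v1h * R5.v1hi = 1 := R5single_mul_one _ _ (by simp [Prod.ext_iff])

/-- core data for `i = 1` -/
def K1 : Core where
  σ := σ1
  X := T 1
  Xi := T (-1)
  cu := C R5.u1h
  cui := C R5.u1hi
  cv := C R5.v1h
  cvi := C R5.v1hi
  g := gm1
  hcancel := fun h => cancel1 h
  hg := gm1_spec
  hσσ := σ1_σ1
  hσX := σ1_T 1
  hXX := by rw [← T_add]; norm_num
  hu := by rw [← map_mul, u1_rel, map_one]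
  hv := by rw [← map_mul, v1_rel, map_one]
  hσcu := σC σ1 _
  hσcui := σC σ1 _
  hσcv := σC σ1 _
  hσcvi := σC σ1 _

/-- core data for `i = 0` -/
def K0 : Core where
  σ := σ0
  X := C R5.q4 * T (-1)
  Xi := C R5.q4i * T 1
  cu := C R5.u0h
  cui := C R5.u0hi
  cv := C R5.v0h
  cvi := C R5.v0hi
  g := gm0
  hcancel := fun h => cancel0 h
  hg := gm0_spec
  hσσ := σ0_σ0
  hσX := by
    rw [map_mul, σC, σ0_T]
    rw [← mul_assoc, ← map_mul, q4_eq, qpow_mul]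
    norm_num
    exact Or.inl rfl
  hXX := by
    calc (C R5.q4 * T (-1) : L) * (C R5.q4i * T 1)
        = C (R5.q4 * R5.q4i) * (T (-1) * T 1) := by rw [map_mul]; ring
      _ = 1 := by rw [q4_mul_q4i, ← T_add, map_one]; norm_num
  hu := by rw [← map_mul, u0_rel, map_one]
  hv := by rw [← map_mul, v0_rel, map_one]
  hσcu := σC σ0 _
  hσcui := σC σ0 _
  hσcv := σC σ0 _
  hσcvi := σC σ0 _

namespace Core
variable (K : Core)

/-- `Û` as an endomorphism -/
def UopL : Module.End R5 L :=
  (LinearMap.mulLeft R5 K.cu) ∘ₗ K.σ.toLinearMap +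
    (LinearMap.mulLeft R5 ((K.cu - K.cui) + (K.cv - K.cvi) * K.X)) ∘ₗ K.g

/-- `Û'` as an endomorphism -/
def U'opL : Module.End R5 L :=
  (LinearMap.mulLeft R5 K.cui) ∘ₗ K.σ.toLinearMap +
    (LinearMap.mulLeft R5 ((K.cu - K.cui) * K.X ^ 2 + (K.cv - K.cvi) * K.X)) ∘ₗ K.g

@[simp] lemma UopL_apply (p : L) : K.UopL p = K.Uop p := rfl
@[simp] lemma U'opL_apply (p : L) : K.U'opL p = K.U'op p := rfl

end Core

@[simp] lemma K0_σ : K0.σ = σ0 := rfl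
@[simp] lemma K0_X : K0.X = C R5.q4 * T (-1) := rfl
@[simp] lemma K0_Xi : K0.Xi = C R5.q4i * T 1 := rfl
@[simp] lemma K0_cu : K0.cu = C R5.u0h := rfl
@[simp] lemma K0_cui : K0.cui = C R5.u0hi := rfl
@[simp] lemma K0_cv : K0.cv = C R5.v0h := rfl
@[simp] lemma K0_cvi : K0.cvi = C R5.v0hi := rfl
@[simp] lemma K0_g : K0.g = gm0 := rfl
@[simp] lemma K1_σ : K1.σ = σ1 := rfl
@[simp] lemma K1_X : K1.X = T 1 := rfl
@[simp] lemma K1_Xi : K1.Xi = T (-1) := rfl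
@[simp] lemma K1_cu : K1.cu = C R5.u1h := rfl
@[simp] lemma K1_cui : K1.cui = C R5.u1hi := rfl
@[simp] lemma K1_cv : K1.cv = C R5.v1h := rfl
@[simp] lemma K1_cvi : K1.cvi = C R5.v1hi := rfl
@[simp] lemma K1_g : K1.g = gm1 := rfl

lemma end_ext {A B : Module.End R5 L} (h : ∀ m : ℤ, A (T m) = B (T m)) : A = B := by
  apply LinearMap.ext
  intro f
  induction f using AddMonoidAlgebra.induction_on with
  | of m => exact h m
  | add p q hp hq => rw [map_add, map_add, hp, hq]
  | smul r p hp => rw [map_smul, map_smul, hp]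

lemma s_eq1 {s : Fin 2 → Module.End R5 L} (hs : Sconds s) : s 1 = σ1.toLinearMap :=
  end_ext fun m => by rw [hs.1 m]; exact (σ1_T m).symm

lemma s_eq0 {s : Fin 2 → Module.End R5 L} (hs : Sconds s) : s 0 = σ0.toLinearMap :=
  end_ext fun m => by rw [hs.2 m]; exact (σ0_T m).symm

lemma Xl0 : Xl 0 = C R5.q4 * T (-1) := rfl
lemma Xl1 : Xl 1 = T 1 := rfl
lemma uh0 : uh 0 = R5.u0h := rfl
lemma uh1 : uh 1 = R5.u1h := rfl
lemma uhi0 : uhi 0 = R5.u0hi := rfl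
lemma uhi1 : uhi 1 = R5.u1hi := rfl
lemma vh0 : vh 0 = R5.v0h := rfl
lemma vh1 : vh 1 = R5.v1h := rfl
lemma vhi0 : vhi 0 = R5.v0hi := rfl
lemma vhi1 : vhi 1 = R5.v1hi := rfl

/-- the concrete Demazure–Lusztig operators -/
def UL : Fin 2 → Module.End R5 L := ![K0.UopL, K1.UopL]
/-- the concrete inverse operators -/
def U'L : Fin 2 → Module.End R5 L := ![K0.U'opL, K1.U'opL]

lemma UL0 : UL 0 = K0.UopL := rfl
lemma UL1 : UL 1 = K1.UopL := rfl
lemma U'L0 : U'L 0 = K0.U'opL := rfl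
lemma U'L1 : U'L 1 = K1.U'opL := rfl

lemma UL0_cond {s : Fin 2 → Module.End R5 L} (hs0 : s 0 = σ0.toLinearMap) (f g : L)
    (h : (1 - Xl 0 ^ 2) * g = f - s 0 f) :
    UL 0 f = uh 0 • s 0 f + (C (uh 0 - uhi 0) + C (vh 0 - vhi 0) * Xl 0) * g := by
  have hgg : g = gm0 f := cancel0 (by rw [gm0_spec]; rw [hs0] at h; exact h)
  rw [hgg, hs0, uh0, uhi0, vh0, vhi0, Xl0, smul_eq_C_mul]
  show K0.Uop f = _
  rw [Core.Uop_def, map_sub, map_sub]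
  simp only [K0_σ, K0_X, K0_cu, K0_cui, K0_cv, K0_cvi, K0_g, AlgHom.toLinearMap_apply]

lemma UL1_cond {s : Fin 2 → Module.End R5 L} (hs1 : s 1 = σ1.toLinearMap) (f g : L)
    (h : (1 - Xl 1 ^ 2) * g = f - s 1 f) :
    UL 1 f = uh 1 • s 1 f + (C (uh 1 - uhi 1) + C (vh 1 - vhi 1) * Xl 1) * g := by
  have hgg : g = gm1 f := cancel1 (by rw [gm1_spec]; rw [hs1] at h; exact h)
  rw [hgg, hs1, uh1, uhi1, vh1, vhi1, Xl1, smul_eq_C_mul]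
  show K1.Uop f = _
  rw [Core.Uop_def, map_sub, map_sub]
  simp only [K1_σ, K1_X, K1_cu, K1_cui, K1_cv, K1_cvi, K1_g, AlgHom.toLinearMap_apply]

lemma U'L0_cond {s : Fin 2 → Module.End R5 L} (hs0 : s 0 = σ0.toLinearMap) (f g : L)
    (h : (1 - Xl 0 ^ 2) * g = f - s 0 f) :
    U'L 0 f = uhi 0 • s 0 f +
      (C (uh 0 - uhi 0) * Xl 0 ^ 2 + C (vh 0 - vhi 0) * Xl 0) * g := by
  have hgg : g = gm0 f := cancel0 (by rw [gm0_spec]; rw [hs0] at h; exact h)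
  rw [hgg, hs0, uh0, uhi0, vh0, vhi0, Xl0, smul_eq_C_mul]
  show K0.U'op f = _
  rw [Core.U'op_def, map_sub, map_sub]
  simp only [K0_σ, K0_X, K0_cu, K0_cui, K0_cv, K0_cvi, K0_g, AlgHom.toLinearMap_apply]

lemma U'L1_cond {s : Fin 2 → Module.End R5 L} (hs1 : s 1 = σ1.toLinearMap) (f g : L)
    (h : (1 - Xl 1 ^ 2) * g = f - s 1 f) :
    U'L 1 f = uhi 1 • s 1 f +
      (C (uh 1 - uhi 1) * Xl 1 ^ 2 + C (vh 1 - vhi 1) * Xl 1) * g := by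
  have hgg : g = gm1 f := cancel1 (by rw [gm1_spec]; rw [hs1] at h; exact h)
  rw [hgg, hs1, uh1, uhi1, vh1, vhi1, Xl1, smul_eq_C_mul]
  show K1.U'op f = _
  rw [Core.U'op_def, map_sub, map_sub]
  simp only [K1_σ, K1_X, K1_cu, K1_cui, K1_cv, K1_cvi, K1_g, AlgHom.toLinearMap_apply]

/-- Hecke relation at the level of endomorphisms -/
lemma Core.heckeEnd (K : Core) {a b : R5} (ha : K.cu = C a) (hb : K.cui = C b) :
    (K.UopL - a • 1) * (K.UopL + b • 1) = 0 := by
  apply LinearMap.ext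
  intro f
  simp only [Module.End.mul_apply, LinearMap.sub_apply, LinearMap.add_apply,
    LinearMap.smul_apply, Module.End.one_apply, LinearMap.zero_apply, map_add, map_smul,
    Core.UopL_apply, smul_add, smul_smul]
  simp only [smul_eq_C_mul, map_mul, ← ha, ← hb]
  linear_combination K.heckeU f - f * K.hu

lemma Core.U'U_one (K : Core) : K.U'opL * K.UopL = 1 := by
  apply LinearMap.ext
  intro f
  simp only [Module.End.mul_apply, Module.End.one_apply, Core.UopL_apply, Core.U'opL_apply]
  exact K.hU'U f

lemma Core.UU'_one (K : Core) : K.UopL * K.U'opL = 1 := by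
  apply LinearMap.ext
  intro f
  simp only [Module.End.mul_apply, Module.End.one_apply, Core.UopL_apply, Core.U'opL_apply]
  exact K.hUU' f

/-- Hecke relation for the `V`-type operator built from `Û'` (case `i = 1`) -/
lemma Core.heckeVEnd1 (K : Core) (W : Module.End R5 L) {a b : R5}
    (ha : K.cv = C a) (hb : K.cvi = C b) (hW : ∀ f : L, W f = K.U'op (K.Xi * f)) :
    (W - a • 1) * (W + b • 1) = 0 := by
  apply LinearMap.ext
  intro f
  simp only [Module.End.mul_apply, LinearMap.sub_apply, LinearMap.add_apply,
    LinearMap.smul_apply, Module.End.one_apply, LinearMap.zero_apply, map_add, map_smul,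
    smul_add, smul_smul]
  rw [hW f, hW (K.U'op (K.Xi * f))]
  simp only [smul_eq_C_mul, map_mul, ← ha, ← hb]
  linear_combination K.heckeA f - f * K.hv

/-- Hecke relation for the `V`-type operator built from `Û'` (case `i = 0`) -/
lemma Core.heckeVEnd0 (K : Core) (W : Module.End R5 L) {a b : R5}
    (ha : K.cv = C a) (hb : K.cvi = C b) (hW : ∀ f : L, W f = K.Xi * K.U'op f) :
    (W - a • 1) * (W + b • 1) = 0 := by
  apply LinearMap.ext
  intro f
  simp only [Module.End.mul_apply, LinearMap.sub_apply, LinearMap.add_apply,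
    LinearMap.smul_apply, Module.End.one_apply, LinearMap.zero_apply, map_add, map_smul,
    smul_add, smul_smul]
  rw [hW f, hW (K.Xi * K.U'op f)]
  simp only [smul_eq_C_mul, map_mul, ← ha, ← hb]
  linear_combination K.heckeB f - f * K.hv

lemma exun0 {s : Fin 2 → Module.End R5 L} (hs0 : s 0 = σ0.toLinearMap) (f : L) :
    ∃! g : L, (1 - Xl 0 ^ 2) * g = f - s 0 f := by
  refine ⟨gm0 f, by rw [hs0]; exact gm0_spec f, fun y hy => ?_⟩
  rw [hs0] at hy
  exact cancel0 (by rw [gm0_spec]; exact hy)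

lemma exun1 {s : Fin 2 → Module.End R5 L} (hs1 : s 1 = σ1.toLinearMap) (f : L) :
    ∃! g : L, (1 - Xl 1 ^ 2) * g = f - s 1 f := by
  refine ⟨gm1 f, by rw [hs1]; exact gm1_spec f, fun y hy => ?_⟩
  rw [hs1] at hy
  exact cancel1 (by rw [gm1_spec]; exact hy)

end S14

open LaurentPolynomial S14 S14.Core

set_option maxHeartbeats 4000000

/-- the Demazure–Lusztig operators are well defined on `L`
(`f − s_i(f)` is divisible by `1 − 𝕏_i²`, with a unique quotient), satisfy the Hecke
relations, `Û_i'` is a two-sided inverse of `Û_i`, the operators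
`V̂₁(f) = Û₁'(𝕏⁻¹·f)`, `V̂₀(f) = q^{−1/4}·𝕏·Û₀'(f)` satisfy the `C∨C₁` relations
including `q^{1/4}·V̂₁∘V̂₀∘Û₀∘Û₁ = id`, and consequently there is an `R`-algebra
homomorphism `H → End_R(L)` with `U_i ↦ Û_i`, `V_i ↦ V̂_i`, under which
`𝕏 = V₁⁻¹·U₁⁻¹` acts as multiplication by `𝕏`. -/
theorem statement14 :
    ∀ s : Fin 2 → Module.End R5 L, Sconds s →
      (∀ (i : Fin 2) (f : L), ∃! g : L, (1 - Xl i ^ 2) * g = f - s i f) ∧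
      (∃ U U' : Fin 2 → Module.End R5 L, Uconds s U ∧ U'conds s U') ∧
      ∀ U U' : Fin 2 → Module.End R5 L, Uconds s U → U'conds s U' →
        (∀ i : Fin 2, (U i - uh i • 1) * (U i + uhi i • 1) = 0) ∧
        (∀ i : Fin 2, U' i * U i = 1 ∧ U i * U' i = 1) ∧
        ∀ Vop : Fin 2 → Module.End R5 L,
          (∀ f : L, Vop 1 f = U' 1 (LaurentPolynomial.T (-1) * f)) →
          (∀ f : L, Vop 0 f =
            LaurentPolynomial.C R5.q4i * LaurentPolynomial.T 1 * U' 0 f) →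
          (∀ i : Fin 2, (Vop i - vh i • 1) * (Vop i + vhi i • 1) = 0) ∧
          R5.q4 • (Vop 1 * Vop 0 * U 0 * U 1) = 1 ∧
          ∃ Φ : H →ₐ[R5] Module.End R5 L,
            Φ H.U0 = U 0 ∧ Φ H.U1 = U 1 ∧ Φ H.V0 = Vop 0 ∧ Φ H.V1 = Vop 1 ∧
            ∀ f : L, Φ H.XX f = LaurentPolynomial.T 1 * f := by
  
  intro s hs
  have hs0 := s_eq0 hs
  have hs1 := s_eq1 hs
  have hgm0 : ∀ f : L, (1 - Xl 0 ^ 2) * gm0 f = f - s 0 f := fun f => by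
    rw [hs0]; exact gm0_spec f
  have hgm1 : ∀ f : L, (1 - Xl 1 ^ 2) * gm1 f = f - s 1 f := fun f => by
    rw [hs1]; exact gm1_spec f
  refine ⟨?_, ⟨UL, U'L, ?_, ?_⟩, ?_⟩
  · -- existence and uniqueness of the division
    intro i f
    fin_cases i
    · exact exun0 hs0 f
    · exact exun1 hs1 f
  · -- Uconds for the concrete operators
    intro i f g hDg
    fin_cases i
    · exact UL0_cond hs0 f g hDg
    · exact UL1_cond hs1 f g hDg
  · -- U'conds for the concrete operators
    intro i f g hDg
    fin_cases i
    · exact U'L0_cond hs0 f g hDg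
    · exact U'L1_cond hs1 f g hDg
  -- now the main part
  intro U U' hUc hU'c
  have hU0 : U 0 = UL 0 :=
    LinearMap.ext fun f => by
      rw [hUc 0 f (gm0 f) (hgm0 f), ← UL0_cond hs0 f (gm0 f) (hgm0 f)]
  have hU1 : U 1 = UL 1 :=
    LinearMap.ext fun f => by
      rw [hUc 1 f (gm1 f) (hgm1 f), ← UL1_cond hs1 f (gm1 f) (hgm1 f)]
  have hU'0 : U' 0 = U'L 0 :=
    LinearMap.ext fun f => by
      rw [hU'c 0 f (gm0 f) (hgm0 f), ← U'L0_cond hs0 f (gm0 f) (hgm0 f)]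
  have hU'1 : U' 1 = U'L 1 :=
    LinearMap.ext fun f => by
      rw [hU'c 1 f (gm1 f) (hgm1 f), ← U'L1_cond hs1 f (gm1 f) (hgm1 f)]
  have heckeU0E : (U 0 - R5.u0h • 1) * (U 0 + R5.u0hi • 1) = 0 := by
    rw [hU0, UL0]; exact K0.heckeEnd K0_cu K0_cui
  have heckeU1E : (U 1 - R5.u1h • 1) * (U 1 + R5.u1hi • 1) = 0 := by
    rw [hU1, UL1]; exact K1.heckeEnd K1_cu K1_cui
  refine ⟨?_, ?_, ?_⟩
  · intro i
    fin_cases i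
    · exact heckeU0E
    · exact heckeU1E
  · intro i
    fin_cases i
    · constructor
      · show U' 0 * U 0 = 1
        rw [hU'0, U'L0, hU0, UL0]; exact K0.U'U_one
      · show U 0 * U' 0 = 1
        rw [hU'0, U'L0, hU0, UL0]; exact K0.UU'_one
    · constructor
      · show U' 1 * U 1 = 1
        rw [hU'1, U'L1, hU1, UL1]; exact K1.U'U_one
      · show U 1 * U' 1 = 1
        rw [hU'1, U'L1, hU1, UL1]; exact K1.UU'_one
  intro Vop hV1 hV0
  have hV1' : ∀ f : L, Vop 1 f = K1.U'op (K1.Xi * f) := fun f => by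
    rw [hV1 f, hU'1, U'L1]; rfl
  have hV0' : ∀ f : L, Vop 0 f = K0.Xi * K0.U'op f := fun f => by
    rw [hV0 f, hU'0, U'L0]; rfl
  have heckeV0E : (Vop 0 - R5.v0h • 1) * (Vop 0 + R5.v0hi • 1) = 0 :=
    K0.heckeVEnd0 (Vop 0) K0_cv K0_cvi hV0'
  have heckeV1E : (Vop 1 - R5.v1h • 1) * (Vop 1 + R5.v1hi • 1) = 0 :=
    K1.heckeVEnd1 (Vop 1) K1_cv K1_cvi hV1'
  have hTT : (T 1 : L) * T (-1) = 1 := by rw [← T_add]; norm_num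
  have hunit : R5.q4 • (Vop 1 * Vop 0 * U 0 * U 1) = 1 := by
    apply LinearMap.ext
    intro f
    simp only [LinearMap.smul_apply, Module.End.mul_apply, Module.End.one_apply]
    rw [hU1, UL1, hU0, UL0, Core.UopL_apply, Core.UopL_apply,
      hV0' (K0.Uop (K1.Uop f)), K0.hU'U (K1.Uop f), hV1' (K0.Xi * K1.Uop f)]
    have e1 : K1.Xi * (K0.Xi * K1.Uop f) = R5.q4i • K1.Uop f := by
      rw [smul_eq_C_mul]
      show (T (-1) : L) * (C R5.q4i * T 1 * K1.Uop f) = C R5.q4i * K1.Uop f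
      have h2 : (T (-1) : L) * T 1 = 1 := by rw [← T_add]; norm_num
      linear_combination (C R5.q4i * K1.Uop f) * h2
    rw [e1, ← Core.U'opL_apply, map_smul, Core.U'opL_apply, K1.hU'U f, smul_smul,
      q4_mul_q4i, one_smul]
  refine ⟨?_, hunit, ?_⟩
  · intro i
    fin_cases i
    · exact heckeV0E
    · exact heckeV1E
  -- the algebra homomorphism
  have halg : ∀ r : R5, algebraMap R5 (Module.End R5 L) r = r • (1 : Module.End R5 L) := by
    intro r
    rw [Module.algebraMap_end_eq_smul_id]
    rfl
  set gen : Cgen → Module.End R5 L := fun x => match x with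
    | Cgen.u0 => U 0 | Cgen.u1 => U 1 | Cgen.v0 => Vop 0 | Cgen.v1 => Vop 1 with hgen
  have hrel : ∀ ⦃x y : FreeAlgebra R5 Cgen⦄, Crel x y →
      (FreeAlgebra.lift R5 gen) x = (FreeAlgebra.lift R5 gen) y := by
    intro x y h
    induction h with
    | heckeU0 =>
      simp only [map_mul, map_sub, map_add, map_zero, AlgHom.commutes,
        FreeAlgebra.lift_ι_apply, halg]
      exact heckeU0E
    | heckeU1 =>
      simp only [map_mul, map_sub, map_add, map_zero, AlgHom.commutes,
        FreeAlgebra.lift_ι_apply, halg]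
      exact heckeU1E
    | heckeV0 =>
      simp only [map_mul, map_sub, map_add, map_zero, AlgHom.commutes,
        FreeAlgebra.lift_ι_apply, halg]
      exact heckeV0E
    | heckeV1 =>
      simp only [map_mul, map_sub, map_add, map_zero, AlgHom.commutes,
        FreeAlgebra.lift_ι_apply, halg]
      exact heckeV1E
    | unit =>
      simp only [map_mul, map_one, AlgHom.commutes, FreeAlgebra.lift_ι_apply, halg]
      show R5.q4 • (1 : Module.End R5 L) * Vop 1 * Vop 0 * U 0 * U 1 = 1
      simp only [smul_mul_assoc, one_mul]
      exact hunit
  set Φ : H →ₐ[R5] Module.End R5 L :=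
    RingQuot.liftAlgHom R5 ⟨FreeAlgebra.lift R5 gen, hrel⟩ with hΦ
  have hΦU0 : Φ H.U0 = U 0 := by
    show Φ (RingQuot.mkAlgHom R5 Crel (FreeAlgebra.ι R5 Cgen.u0)) = U 0
    rw [hΦ, RingQuot.liftAlgHom_mkAlgHom_apply, FreeAlgebra.lift_ι_apply]
  have hΦU1 : Φ H.U1 = U 1 := by
    show Φ (RingQuot.mkAlgHom R5 Crel (FreeAlgebra.ι R5 Cgen.u1)) = U 1
    rw [hΦ, RingQuot.liftAlgHom_mkAlgHom_apply, FreeAlgebra.lift_ι_apply]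
  have hΦV0 : Φ H.V0 = Vop 0 := by
    show Φ (RingQuot.mkAlgHom R5 Crel (FreeAlgebra.ι R5 Cgen.v0)) = Vop 0
    rw [hΦ, RingQuot.liftAlgHom_mkAlgHom_apply, FreeAlgebra.lift_ι_apply]
  have hΦV1 : Φ H.V1 = Vop 1 := by
    show Φ (RingQuot.mkAlgHom R5 Crel (FreeAlgebra.ι R5 Cgen.v1)) = Vop 1
    rw [hΦ, RingQuot.liftAlgHom_mkAlgHom_apply, FreeAlgebra.lift_ι_apply]
  have hΦc : ∀ r : R5, Φ (H.c r) = r • (1 : Module.End R5 L) := fun r => by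
    show Φ (algebraMap R5 H r) = _
    rw [AlgHom.commutes, halg]
  refine ⟨Φ, hΦU0, hΦU1, hΦV0, hΦV1, ?_⟩
  intro f
  have hΦXX : Φ H.XX =
      (Vop 1 - R5.v1h • 1 + R5.v1hi • 1) * (U 1 - R5.u1h • 1 + R5.u1hi • 1) := by
    show Φ (H.V1i * H.U1i) = _
    rw [map_mul]
    congr 1
    · show Φ (H.V1 - H.c R5.v1h + H.c R5.v1hi) = _
      have hsub1 : Φ (H.V1 - H.c R5.v1h) = Φ H.V1 - Φ (H.c R5.v1h) := map_sub Φ _ _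
      rw [map_add, hsub1, hΦV1, hΦc, hΦc]
    · show Φ (H.U1 - H.c R5.u1h + H.c R5.u1hi) = _
      have hsub2 : Φ (H.U1 - H.c R5.u1h) = Φ H.U1 - Φ (H.c R5.u1h) := map_sub Φ _ _
      rw [map_add, hsub2, hΦU1, hΦc, hΦc]
  rw [hΦXX]
  simp only [Module.End.mul_apply, LinearMap.sub_apply, LinearMap.add_apply,
    LinearMap.smul_apply, Module.End.one_apply]
  have hA1 : U 1 f - R5.u1h • f + R5.u1hi • f = K1.U'op f := by
    have h1 : K1.Uop (U 1 f - R5.u1h • f + R5.u1hi • f) = f := by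
      rw [hU1, UL1]
      show K1.UopL (K1.UopL f - R5.u1h • f + R5.u1hi • f) = f
      rw [map_add, map_sub, map_smul, map_smul]
      simp only [Core.UopL_apply]
      simp only [smul_eq_C_mul, ← K1_cu, ← K1_cui]
      linear_combination K1.heckeU f
    calc U 1 f - R5.u1h • f + R5.u1hi • f
        = K1.U'op (K1.Uop (U 1 f - R5.u1h • f + R5.u1hi • f)) :=
          (K1.hU'U (U 1 f - R5.u1h • f + R5.u1hi • f)).symm
      _ = K1.U'op f := by rw [h1]
  have hW : ∀ z : L, T 1 * K1.Uop (Vop 1 z) = z := fun z => by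
    rw [hV1' z, K1.hUU' (K1.Xi * z)]
    show (T 1 : L) * (T (-1) * z) = z
    linear_combination z * hTT
  have hB : ∀ y : L, Vop 1 y - R5.v1h • y + R5.v1hi • y = T 1 * K1.Uop y := by
    intro y
    have hVB : Vop 1 (Vop 1 y - R5.v1h • y + R5.v1hi • y) = y := by
      rw [map_add, map_sub, map_smul, map_smul, hV1' y,
        hV1' (K1.U'op (K1.Xi * y))]
      simp only [smul_eq_C_mul, ← K1_cv, ← K1_cvi]
      linear_combination K1.heckeA y
    calc Vop 1 y - R5.v1h • y + R5.v1hi • y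
        = T 1 * K1.Uop (Vop 1 (Vop 1 y - R5.v1h • y + R5.v1hi • y)) := (hW _).symm
      _ = T 1 * K1.Uop y := by rw [hVB]
  rw [hA1, hB (K1.U'op f), K1.hUU' f]
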